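/- (Weyl formula) Let ∇ and ∇̂ be torsion-free connections on an n-manifold N with parallel volume forms ω and ω̂ = λω, and suppose ∇ and ∇̂ have the same unparametrized geodesics (i.e., ∇̂_X X − ∇_X X is proportional to X for every vector field X). Then ∇̂_X Y − ∇_X Y = (X · ln λ^{1/(n+1)}) Y + (Y · ln λ^{1/(n+1)}) X for all vector fields X, Y. -/

import Mathlib

/-- Partial derivative in the `i`-th coordinate direction. -/
noncomputable def pd {m : ℕ} (i : Fin m) (f : (Fin m → ℝ) → ℝ) (x : Fin m → ℝ) : ℝ :=
  fderiv ℝ f x (Pi.single i 1)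

lemma weyl_bilinear (n : ℕ) (D : Fin n → Fin n → Fin n → ℝ) (k a b : Fin n) (s t : ℝ) :
    (∑ i, ∑ j, D k i j * (s * (Pi.single a 1 : Fin n → ℝ) i + t * (Pi.single b 1 : Fin n → ℝ) i)
      * (s * (Pi.single a 1 : Fin n → ℝ) j + t * (Pi.single b 1 : Fin n → ℝ) j))
    = s*s*D k a a + s*t*D k a b + t*s*D k b a + t*t*D k b b := by
  simp only [Pi.single_apply, mul_ite, ite_mul, mul_one, mul_zero, one_mul, zero_mul,
    mul_add, add_mul, Finset.sum_add_distrib, Finset.sum_ite_eq', Finset.mem_univ, if_true,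
    add_zero, zero_add]
  ring

/-- (Weyl formula) Let `∇`, `∇̂` be torsion-free connections (Christoffel symbols `Γ`, `Γ'`)
on an `n`-manifold with parallel volume forms `ω` and `ω' = λ ω`, having the same
unparametrized geodesics (the difference tensor satisfies `D(v,v) ∈ span(v)` for all `v`).
Then `∇̂_X Y − ∇_X Y = (X・ln λ^{1/(n+1)}) Y + (Y・ln λ^{1/(n+1)}) X`, i.e. in
coordinates `Γ'^k_{ij} − Γ^k_{ij} = φᵢ δ^k_j + φⱼ δ^k_i` with `φᵢ = ∂ᵢ(ln λ)/(n+1)`. -/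
theorem stmt_15 (n : ℕ)
    (Γ Γ' : Fin n → Fin n → Fin n → (Fin n → ℝ) → ℝ)
    (hΓtf : ∀ k i j x, Γ k i j x = Γ k j i x)
    (hΓ'tf : ∀ k i j x, Γ' k i j x = Γ' k j i x)
    (ω ω' : (Fin n → ℝ) → ℝ)
    (hωpos : ∀ x, 0 < ω x) (hω'pos : ∀ x, 0 < ω' x)
    (hωdiff : Differentiable ℝ ω) (hω'diff : Differentiable ℝ ω')
    (hωpar : ∀ (i : Fin n) x, pd i ω x = (∑ α, Γ α i α x) * ω x)
    (hω'par : ∀ (i : Fin n) x, pd i ω' x = (∑ α, Γ' α i α x) * ω' x)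
    (hgeod : ∀ x (v : Fin n → ℝ), ∃ c : ℝ,
      ∀ k, (∑ i, ∑ j, (Γ' k i j x - Γ k i j x) * v i * v j) = c * v k) :
    ∀ x (k i j : Fin n),
      Γ' k i j x - Γ k i j x =
        (pd i (fun y => Real.log (ω' y / ω y)) x / (n + 1)) * (if k = j then 1 else 0) +
        (pd j (fun y => Real.log (ω' y / ω y)) x / (n + 1)) * (if k = i then 1 else 0) := by
  intro x
  set D : Fin n → Fin n → Fin n → ℝ := fun k i j => Γ' k i j x - Γ k i j x with hDdef
  have hDsym : ∀ k i j, D k i j = D k j i := by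
    intro k i j; simp only [hDdef, hΓtf k i j x, hΓ'tf k i j x]
  -- the polarized geodesic condition
  have key : ∀ (a b : Fin n) (s t : ℝ), ∃ c : ℝ, ∀ k,
      s*s*D k a a + s*t*D k a b + t*s*D k b a + t*t*D k b b
      = c * (s * (if k = a then (1:ℝ) else 0) + t * (if k = b then 1 else 0)) := by
    intro a b s t
    obtain ⟨c, hc⟩ := hgeod x
      (fun u => s * (Pi.single a 1 : Fin n → ℝ) u + t * (Pi.single b 1 : Fin n → ℝ) u)
    refine ⟨c, fun k => ?_⟩
    have h := hc k
    rw [weyl_bilinear n D k a b s t] at h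
    simpa [Pi.single_apply] using h
  have hdiag : ∀ a k, k ≠ a → D k a a = 0 := by
    intro a k hk
    obtain ⟨c, hc⟩ := key a a 1 0
    have h := hc k
    simp [hk] at h
    linarith
  have hzero : ∀ k a b, k ≠ a → k ≠ b → D k a b = 0 := by
    intro k a b hka hkb
    obtain ⟨c, hc⟩ := key a b 1 1
    have h := hc k
    simp [hka, hkb] at h
    have h1 := hdiag a k hka
    have h2 := hdiag b k hkb
    have h3 := hDsym k a b
    linarith
  set φ : Fin n → ℝ := fun a => D a a a / 2 with hφdef
  have hmix : ∀ a b, a ≠ b → D a a b = φ b ∧ D b a b = φ a := by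
    intro a b hab
    obtain ⟨c1, hc1⟩ := key a b 1 1
    obtain ⟨c2, hc2⟩ := key a b 1 (-1)
    have e1a := hc1 a
    have e1b := hc1 b
    have e2a := hc2 a
    have e2b := hc2 b
    simp [hab, (Ne.symm hab)] at e1a e1b e2a e2b
    have z1 : D a b b = 0 := hdiag b a hab
    have z2 : D b a a = 0 := hdiag a b (Ne.symm hab)
    have s1 := hDsym a a b
    have s2 := hDsym b a b
    constructor
    · show D a a b = D b b b / 2
      linear_combination (e1a - e1b - e2a - e2b) / 4 + s1 / 2 + z2 / 2
    · show D b a b = D a a a / 2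
      linear_combination (-e1a + e1b - e2a - e2b) / 4 + z1 / 2 + s2 / 2
  -- the pointwise Weyl formula with φ
  have hformula : ∀ k a b, D k a b =
      φ a * (if k = b then 1 else 0) + φ b * (if k = a then 1 else 0) := by
    intro k a b
    by_cases hab : a = b
    · subst hab
      by_cases hka : k = a
      · subst hka; simp [hφdef]; try ring
      · simp [hka, hdiag a k hka]
    · by_cases hka : k = a
      · subst hka
        have := (hmix k b hab).1
        simp [hab, this]
      · by_cases hkb : k = b
        · subst hkb
          have := (hmix a k hab).2
          simp [Ne.symm hab, this]
        · simp [hka, hkb, hzero k a b hka hkb]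
  -- the trace identity
  have htrace : ∀ a, (∑ α, D α a α) = (n + 1) * φ a := by
    intro a
    have hterm : ∀ α : Fin n, D α a α = φ a + (if α = a then φ a else 0) := by
      intro α
      rw [hformula α a α]
      by_cases h : α = a
      · subst h; simp
      · simp [h]
    rw [Finset.sum_congr rfl fun α _ => hterm α]
    simp [Finset.sum_add_distrib, Finset.sum_ite_eq', Finset.card_univ]
    ring
  -- computing the derivative of log(ω'/ω)
  have hlog : ∀ i : Fin n, pd i (fun y => Real.log (ω' y / ω y)) x
      = (∑ α, Γ' α i α x) - (∑ α, Γ α i α x) := by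
    intro i
    have heq : (fun y => Real.log (ω' y / ω y))
        = fun y => Real.log (ω' y) - Real.log (ω y) :=
      funext fun y => Real.log_div (hω'pos y).ne' (hωpos y).ne'
    have h1 : HasFDerivAt (fun y => Real.log (ω' y)) ((ω' x)⁻¹ • fderiv ℝ ω' x) x :=
      (hω'diff x).hasFDerivAt.log (hω'pos x).ne'
    have h2 : HasFDerivAt (fun y => Real.log (ω y)) ((ω x)⁻¹ • fderiv ℝ ω x) x :=
      (hωdiff x).hasFDerivAt.log (hωpos x).ne'
    have h3 : HasFDerivAt (fun y => Real.log (ω' y) - Real.log (ω y))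
        ((ω' x)⁻¹ • fderiv ℝ ω' x - (ω x)⁻¹ • fderiv ℝ ω x) x := h1.sub h2
    rw [pd, heq, h3.fderiv]
    have e1 : fderiv ℝ ω' x (Pi.single i 1) = (∑ α, Γ' α i α x) * ω' x := hω'par i x
    have e2 : fderiv ℝ ω x (Pi.single i 1) = (∑ α, Γ α i α x) * ω x := hωpar i x
    simp only [ContinuousLinearMap.sub_apply, ContinuousLinearMap.smul_apply, e1, e2,
      smul_eq_mul]
    rw [mul_comm _ (ω' x), inv_mul_cancel_left₀ (hω'pos x).ne',
      mul_comm _ (ω x), inv_mul_cancel_left₀ (hωpos x).ne']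
  intro k i j
  have hD2 : Γ' k i j x - Γ k i j x = D k i j := rfl
  have hsum : ∀ a : Fin n, (∑ α, Γ' α a α x) - (∑ α, Γ α a α x) = (n + 1) * φ a := by
    intro a
    rw [← htrace a, ← Finset.sum_sub_distrib]
  have hn1 : ((n : ℝ) + 1) ≠ 0 := by positivity
  rw [hD2, hformula k i j, hlog i, hlog j, hsum i, hsum j]
  field_simp
  try ring
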